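/- For every concept class 𝓛 over a universe X, PBTD(𝓛) ≤ RTD(𝓛); moreover, if 𝓛 is finite then PBTD(𝓛) = RTD(𝓛). -/
import Mathlib


namespace PBT

variable {X : Type*}

/-- A set `L ⊆ X` is consistent with a set `T` of labeled examples
(label `true` = “+”, label `false` = “−”). -/
def Consistent (L : Set X) (T : Set (X × Bool)) : Prop :=
  ∀ p ∈ T, (p.2 = true → p.1 ∈ L) ∧ (p.2 = false → p.1 ∉ L)

/-- `T` is a teaching set for `L` w.r.t. the concept class `𝓛`:
`L` is the only concept in `𝓛` that is consistent with `T`. -/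
def IsTeachingSet (𝓛 : Set (Set X)) (L : Set X) (T : Set (X × Bool)) : Prop :=
  Consistent L T ∧ ∀ L' ∈ 𝓛, Consistent L' T → L' = L

/-- `TD L 𝓛`: least size of a finite teaching set for `L` w.r.t. `𝓛` (`⊤` if none exists). -/
noncomputable def TD (L : Set X) (𝓛 : Set (Set X)) : ℕ∞ :=
  sInf {n : ℕ∞ | ∃ T : Finset (X × Bool), IsTeachingSet 𝓛 L ↑T ∧ n = T.card}

/-- A positive teaching set, identified with its set of (positively labeled) points. -/
def IsPosTeachingSet (𝓛 : Set (Set X)) (L : Set X) (S : Set X) : Prop :=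
  S ⊆ L ∧ ∀ L' ∈ 𝓛, S ⊆ L' → L' = L

/-- least size of a finite positive teaching set for `L` w.r.t. `𝓛` (`⊤` if none exists). -/
noncomputable def TDpos (L : Set X) (𝓛 : Set (Set X)) : ℕ∞ :=
  sInf {n : ℕ∞ | ∃ S : Finset X, IsPosTeachingSet 𝓛 L ↑S ∧ n = S.card}

/-- A strict partial order (preference relation) on concepts:
`pr L' L` means `L` is strictly preferred over `L'`. -/
def StrictPO (pr : Set X → Set X → Prop) : Prop :=
  (∀ A, ¬ pr A A) ∧ ∀ A B C : Set X, pr A B → pr B C → pr A C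

/-- `PBTDord 𝓛 pr = sup_{L ∈ 𝓛} TD(L, 𝓛 \ {L' ∈ 𝓛 | pr L' L})`. -/
noncomputable def PBTDord (𝓛 : Set (Set X)) (pr : Set X → Set X → Prop) : ℕ∞ :=
  ⨆ L ∈ 𝓛, TD L {L' ∈ 𝓛 | ¬ pr L' L}

/-- preference-based teaching dimension of `𝓛`. -/
noncomputable def PBTD (𝓛 : Set (Set X)) : ℕ∞ :=
  sInf {v : ℕ∞ | ∃ pr, StrictPO pr ∧ v = PBTDord 𝓛 pr}

/-- `PBTDposOrd 𝓛 pr = sup_{L ∈ 𝓛} TD⁺(L, 𝓛 \ {L' ∈ 𝓛 | pr L' L})`. -/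
noncomputable def PBTDposOrd (𝓛 : Set (Set X)) (pr : Set X → Set X → Prop) : ℕ∞ :=
  ⨆ L ∈ 𝓛, TDpos L {L' ∈ 𝓛 | ¬ pr L' L}

/-- positive preference-based teaching dimension of `𝓛`. -/
noncomputable def PBTDpos (𝓛 : Set (Set X)) : ℕ∞ :=
  sInf {v : ℕ∞ | ∃ pr, StrictPO pr ∧ v = PBTDposOrd 𝓛 pr}


/-- A teaching sequence for `𝓛`: a (finite or infinite) partition of `𝓛` into
sub-classes `P 0, P 1, …` (a finite sequence is modelled by letting the
remaining parts be empty). -/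
def IsTeachingSeq (𝓛 : Set (Set X)) (P : ℕ → Set (Set X)) : Prop :=
  (∀ i j, i ≠ j → Disjoint (P i) (P j)) ∧ (⋃ i, P i) = 𝓛

/-- the order `sup_i sup_{L ∈ P i} TD(L, 𝓛 \ (P 0 ∪ ⋯ ∪ P (i-1)))` of a teaching sequence. -/
noncomputable def seqOrder (𝓛 : Set (Set X)) (P : ℕ → Set (Set X)) : ℕ∞ :=
  ⨆ i, ⨆ L ∈ P i, TD L (𝓛 \ ⋃ j < i, P j)

/-- the recursive teaching dimension of `𝓛`. -/
noncomputable def RTD (𝓛 : Set (Set X)) : ℕ∞ :=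
  sInf {v : ℕ∞ | ∃ P, IsTeachingSeq 𝓛 P ∧ v = seqOrder 𝓛 P}

lemma TD_anti {X : Type*} {L : Set X} {C C' : Set (Set X)} (h : C' ⊆ C) :
    TD L C' ≤ TD L C := by
  apply sInf_le_sInf
  rintro n ⟨T, ⟨hc, hu⟩, rfl⟩
  exact ⟨T, ⟨hc, fun L' hL' hcons => hu L' (h hL') hcons⟩, rfl⟩

lemma pbtd_le_rtd_aux {X : Type*} (𝓛 : Set (Set X)) : PBTD 𝓛 ≤ RTD 𝓛 := by
  apply le_sInf
  rintro v ⟨P, ⟨hdisj, hUnion⟩, rfl⟩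
  set f : Set X → ℕ := fun L => sInf {i | L ∈ P i} with hf
  have hmem : ∀ L ∈ 𝓛, L ∈ P (f L) := by
    intro L hL
    have : ∃ i, L ∈ P i := by rw [← hUnion] at hL; exact Set.mem_iUnion.mp hL
    exact Nat.sInf_mem this
  set pr : Set X → Set X → Prop := fun A B => A ∈ 𝓛 ∧ B ∈ 𝓛 ∧ f A < f B with hpr
  have hspo : StrictPO pr := ⟨fun A h => lt_irrefl _ h.2.2,
    fun A B C h1 h2 => ⟨h1.1, h2.2.1, h1.2.2.trans h2.2.2⟩⟩
  refine le_trans (sInf_le ⟨pr, hspo, rfl⟩) ?_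
  apply iSup₂_le
  intro L hL
  have hLP := hmem L hL
  have hclass : {L' ∈ 𝓛 | ¬ pr L' L} = 𝓛 \ ⋃ j < f L, P j := by
    ext L'
    simp only [Set.mem_setOf_eq, Set.mem_diff, Set.mem_iUnion, hpr]
    constructor
    · rintro ⟨hL', hnp⟩
      refine ⟨hL', ?_⟩
      rintro ⟨j, hj, hPj⟩
      have hle : f L' ≤ j := Nat.sInf_le hPj
      exact hnp ⟨hL', hL, lt_of_le_of_lt hle hj⟩
    · rintro ⟨hL', hnot⟩
      refine ⟨hL', ?_⟩
      rintro ⟨_, _, hlt⟩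
      exact hnot ⟨f L', hlt, hmem L' hL'⟩
  rw [hclass]
  calc TD L (𝓛 \ ⋃ j < f L, P j)
      ≤ ⨆ L' ∈ P (f L), TD L' (𝓛 \ ⋃ j < f L, P j) := le_iSup₂ (f := fun L' (_ : L' ∈ P (f L)) => TD L' (𝓛 \ ⋃ j < f L, P j)) L hLP
    _ ≤ seqOrder 𝓛 P :=
        le_iSup (fun i => ⨆ L' ∈ P i, TD L' (𝓛 \ ⋃ j < i, P j)) (f L)

lemma rtd_le_pbtd_aux {X : Type*} (𝓛 : Set (Set X)) (hfin : 𝓛.Finite) :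
    RTD 𝓛 ≤ PBTD 𝓛 := by
  apply le_sInf
  rintro v ⟨pr, hspo, rfl⟩
  set g : Set X → ℕ := fun L => {L' ∈ 𝓛 | pr L' L}.ncard with hg
  have hgmono : ∀ A B, A ∈ 𝓛 → pr A B → g A < g B := by
    intro A B hA hAB
    apply Set.ncard_lt_ncard
    · constructor
      · rintro L' ⟨hL', hpL'⟩
        exact ⟨hL', hspo.2 _ _ _ hpL' hAB⟩
      · intro hsub
        have : A ∈ {L' ∈ 𝓛 | pr L' A} := hsub ⟨hA, hAB⟩
        exact hspo.1 A this.2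
    · exact hfin.subset (fun L' hL' => hL'.1)
  set P : ℕ → Set (Set X) := fun i => {L ∈ 𝓛 | g L = i} with hP
  have hTS : IsTeachingSeq 𝓛 P := by
    constructor
    · intro i j hij
      rw [Set.disjoint_left]
      rintro L ⟨_, hi⟩ ⟨_, hj⟩
      exact hij (hi ▸ hj ▸ rfl)
    · ext L
      simp only [Set.mem_iUnion, hP, Set.mem_setOf_eq]
      exact ⟨fun ⟨i, h, _⟩ => h, fun h => ⟨g L, h, rfl⟩⟩
  refine le_trans (sInf_le ⟨P, hTS, rfl⟩) ?_
  apply iSup_le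
  intro i
  apply iSup₂_le
  rintro L ⟨hL, hgL⟩
  have hsub : 𝓛 \ ⋃ j < i, P j ⊆ {L' ∈ 𝓛 | ¬ pr L' L} := by
    rintro L' ⟨hL', hnot⟩
    refine ⟨hL', fun hpL' => ?_⟩
    have hlt : g L' < i := hgL ▸ hgmono L' L hL' hpL'
    exact hnot (Set.mem_iUnion.mpr ⟨g L', Set.mem_iUnion.mpr ⟨hlt, hL', rfl⟩⟩)
  exact le_trans (TD_anti hsub) (le_iSup₂ (f := fun L'' (_ : L'' ∈ 𝓛) => TD L'' {L' ∈ 𝓛 | ¬ pr L' L''}) L hL)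

/-- `PBTD(𝓛) ≤ RTD(𝓛)`, with equality for finite `𝓛`. -/
theorem pbtd_le_rtd {X : Type*} (𝓛 : Set (Set X)) :
    PBTD 𝓛 ≤ RTD 𝓛 ∧ (𝓛.Finite → PBTD 𝓛 = RTD 𝓛) := by
  exact ⟨pbtd_le_rtd_aux 𝓛, fun hfin =>
    le_antisymm (pbtd_le_rtd_aux 𝓛) (rtd_le_pbtd_aux 𝓛 hfin)⟩

end PBT
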